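/- Under the setup of Lemma on z-iterates of REBK: if z^0 ∈ b + ran(A) and 0 < α < 2/β^J, then for all k, E‖z^k − b_⊥‖₂² ≤ ρ^k ‖z^0 − b_⊥‖₂², where ρ = 1 − (2α − α²β^J)σ_r(A)²/‖A‖_F² and b_⊥ = (I − AA†)b. In particular ρ ∈ [0,1). -/

import Mathlib

open Matrix

/-- The squared Frobenius norm of a real matrix. -/
noncomputable def frobSq {ι κ : Type*} [Fintype ι] [Fintype κ] (A : Matrix ι κ ℝ) : ℝ :=
  ∑ i, ∑ j, (A i j) ^ 2

/-- The spectral (ℓ₂ operator) norm of a real matrix. -/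
noncomputable def specNorm {ι κ : Type*} [Fintype ι] [Fintype κ] [DecidableEq κ]
    (A : Matrix ι κ ℝ) : ℝ :=
  ‖LinearMap.toContinuousLinearMap (Matrix.toEuclideanLin A)‖

/-- The squared Euclidean norm of a vector. -/
noncomputable def norm2Sq {ι : Type*} [Fintype ι] (v : ι → ℝ) : ℝ := ∑ i, (v i) ^ 2

/-- `P` is the Moore–Penrose pseudoinverse of `A`. -/
def IsMoorePenrose {m n : ℕ} (A : Matrix (Fin m) (Fin n) ℝ)
    (P : Matrix (Fin n) (Fin m) ℝ) : Prop :=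
  A * P * A = A ∧ P * A * P = P ∧ (A * P)ᵀ = A * P ∧ (P * A)ᵀ = P * A

/-- The column submatrix of `A` indexed by the finite set `J`. -/
def colSub {m n : ℕ} (A : Matrix (Fin m) (Fin n) ℝ) (J : Finset (Fin n)) :
    Matrix (Fin m) J ℝ :=
  A.submatrix id (fun j => (j : Fin n))

lemma norm2Sq_nonneg {ι : Type*} [Fintype ι] (v : ι → ℝ) : 0 ≤ norm2Sq v :=
  Finset.sum_nonneg fun _ _ => sq_nonneg _

lemma norm2Sq_eq_dot {ι : Type*} [Fintype ι] (v : ι → ℝ) : norm2Sq v = v ⬝ᵥ v := by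
  simp [norm2Sq, dotProduct, sq]

lemma norm2Sq_eq_zero {ι : Type*} [Fintype ι] {v : ι → ℝ} (h : norm2Sq v = 0) : v = 0 := by
  funext i
  have := (Finset.sum_eq_zero_iff_of_nonneg (fun i _ => sq_nonneg (v i))).1 h i (Finset.mem_univ i)
  exact pow_eq_zero_iff (n := 2) (by norm_num) |>.1 this

lemma norm2Sq_sub_smul {ι : Type*} [Fintype ι] (u x : ι → ℝ) (c : ℝ) :
    norm2Sq (u - c • x) = norm2Sq u - 2*c*(u ⬝ᵥ x) + c^2 * norm2Sq x := by
  simp only [norm2Sq, dotProduct, Pi.sub_apply, Pi.smul_apply, smul_eq_mul]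
  rw [Finset.mul_sum, Finset.mul_sum, ← Finset.sum_sub_distrib, ← Finset.sum_add_distrib]
  exact Finset.sum_congr rfl fun i _ => by ring

lemma norm2Sq_smul {ι : Type*} [Fintype ι] (c : ℝ) (v : ι → ℝ) :
    norm2Sq (c • v) = c^2 * norm2Sq v := by
  simp only [norm2Sq, Pi.smul_apply, smul_eq_mul, mul_pow, Finset.mul_sum]

lemma dot_mul_transpose {ι κ : Type*} [Fintype ι] [Fintype κ] (C : Matrix ι κ ℝ) (u : ι → ℝ) :
    u ⬝ᵥ (C * Cᵀ).mulVec u = norm2Sq (Cᵀ.mulVec u) := by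
  rw [← mulVec_mulVec, dotProduct_mulVec, norm2Sq_eq_dot, mulVec_transpose]

lemma frobSq_nonneg {ι κ : Type*} [Fintype ι] [Fintype κ] (M : Matrix ι κ ℝ) : 0 ≤ frobSq M :=
  Finset.sum_nonneg fun _ _ => Finset.sum_nonneg fun _ _ => sq_nonneg _

lemma frobSq_pos {ι κ : Type*} [Fintype ι] [Fintype κ] {M : Matrix ι κ ℝ} (h : M ≠ 0) :
    0 < frobSq M := by
  rcases (frobSq_nonneg M).lt_or_eq with h' | h'
  · exact h'
  · exfalso; apply h
    ext i j
    have h1 := (Finset.sum_eq_zero_iff_of_nonneg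
      (fun i _ => Finset.sum_nonneg fun j _ => sq_nonneg (M i j))).1 h'.symm i (Finset.mem_univ i)
    have h2 := (Finset.sum_eq_zero_iff_of_nonneg (fun j _ => sq_nonneg (M i j))).1 h1 j
      (Finset.mem_univ j)
    simpa using pow_eq_zero_iff (n := 2) (by norm_num) |>.1 h2

lemma euclid_norm_sq {ι : Type*} [Fintype ι] (v : ι → ℝ) :
    ‖(WithLp.equiv 2 (ι → ℝ)).symm v‖ ^ 2 = norm2Sq v := by
  rw [EuclideanSpace.norm_eq, Real.sq_sqrt (Finset.sum_nonneg fun _ _ => sq_nonneg _)]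
  simp [norm2Sq, sq_abs]

lemma norm2Sq_mulVec_le {ι κ : Type*} [Fintype ι] [Fintype κ] [DecidableEq κ]
    (C : Matrix ι κ ℝ) (w : κ → ℝ) :
    norm2Sq (C.mulVec w) ≤ specNorm C ^ 2 * norm2Sq w := by
  have h := (LinearMap.toContinuousLinearMap (Matrix.toEuclideanLin C)).le_opNorm
    ((WithLp.equiv 2 (κ → ℝ)).symm w)
  have he : (LinearMap.toContinuousLinearMap (Matrix.toEuclideanLin C))
      ((WithLp.equiv 2 (κ → ℝ)).symm w) = (WithLp.equiv 2 (ι → ℝ)).symm (C.mulVec w) := by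
    simp [LinearMap.coe_toContinuousLinearMap']
  rw [he] at h
  have := mul_self_le_mul_self (norm_nonneg _) h
  rw [← pow_two, ← pow_two] at this
  calc norm2Sq (C.mulVec w) = ‖(WithLp.equiv 2 (ι → ℝ)).symm (C.mulVec w)‖^2 :=
        (euclid_norm_sq _).symm
    _ ≤ (specNorm C * ‖(WithLp.equiv 2 (κ → ℝ)).symm w‖)^2 := this
    _ = specNorm C ^2 * norm2Sq w := by rw [mul_pow, euclid_norm_sq]

lemma specNorm_pos {ι κ : Type*} [Fintype ι] [Fintype κ] [DecidableEq κ]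
    {C : Matrix ι κ ℝ} (h : C ≠ 0) : 0 < specNorm C := by
  rw [specNorm, norm_pos_iff]
  intro h0
  apply h
  have : Matrix.toEuclideanLin C = 0 := by
    apply LinearMap.toContinuousLinearMap.injective
    simpa using h0
  exact (LinearEquiv.map_eq_zero_iff _).1 this

section part
variable {m n t : ℕ} (A : Matrix (Fin m) (Fin n) ℝ) (B : Fin t → Finset (Fin n))

lemma sum_partition (hdisj : ∀ i j, i ≠ j → Disjoint (B i) (B j))
    (hcover : ∀ l : Fin n, ∃ j, l ∈ B j) (g : Fin n → ℝ) : ∑ j, ∑ l ∈ B j, g l = ∑ l, g l := by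
  rw [← Finset.sum_biUnion]
  · congr 1
    ext l
    simp only [Finset.mem_biUnion, Finset.mem_univ, true_and, iff_true]
    exact hcover l
  · intro i _ j _ hij
    exact hdisj i j hij

lemma frobSq_partition (hdisj : ∀ i j, i ≠ j → Disjoint (B i) (B j))
    (hcover : ∀ l : Fin n, ∃ j, l ∈ B j) : ∑ j, frobSq (colSub A (B j)) = frobSq A := by
  have : ∀ j, frobSq (colSub A (B j)) = ∑ l ∈ B j, ∑ i, (A i l)^2 := by
    intro j
    rw [frobSq, Finset.sum_comm, ← Finset.sum_coe_sort (B j)]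
    rfl
  simp only [this]
  rw [sum_partition B hdisj hcover, frobSq, Finset.sum_comm]

lemma colSubT_mulVec (J : Finset (Fin n)) (u : Fin m → ℝ) (l : J) :
    (colSub A J)ᵀ.mulVec u l = Aᵀ.mulVec u (l : Fin n) := rfl

lemma norm2Sq_colSubT_partition (hdisj : ∀ i j, i ≠ j → Disjoint (B i) (B j))
    (hcover : ∀ l : Fin n, ∃ j, l ∈ B j) (u : Fin m → ℝ) :
    ∑ j, norm2Sq ((colSub A (B j))ᵀ.mulVec u) = norm2Sq (Aᵀ.mulVec u) := by
  have : ∀ j, norm2Sq ((colSub A (B j))ᵀ.mulVec u) = ∑ l ∈ B j, (Aᵀ.mulVec u l)^2 := by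
    intro j
    rw [norm2Sq, ← Finset.sum_coe_sort (B j)]
    rfl
  simp only [this]
  rw [sum_partition B hdisj hcover, norm2Sq]

lemma colSub_mulVec (J : Finset (Fin n)) (y : J → ℝ) :
    (colSub A J).mulVec y = A.mulVec (fun l => if h : l ∈ J then y ⟨l, h⟩ else 0) := by
  funext i
  show ∑ l : J, A i l * y l = ∑ l : Fin n, A i l * (if h : l ∈ J then y ⟨l, h⟩ else 0)
  rw [← Finset.sum_subset (Finset.subset_univ J)
    (by intro l _ hl; rw [dif_neg hl, mul_zero]), ← Finset.sum_coe_sort J]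
  exact Finset.sum_congr rfl fun l _ => by rw [dif_pos l.2]

end part

lemma norm2Sq_unitary_mulVec {n : ℕ} (U : Matrix.unitaryGroup (Fin n) ℝ) (y : Fin n → ℝ) :
    norm2Sq ((U : Matrix (Fin n) (Fin n) ℝ).mulVec y) = norm2Sq y := by
  set V : Matrix (Fin n) (Fin n) ℝ := (U : Matrix (Fin n) (Fin n) ℝ) with hV
  have hU : star V * V = 1 := mem_unitaryGroup_iff'.mp U.2
  have h := dot_mul_transpose Vᵀ y
  rw [transpose_transpose] at h
  have hVt : Vᵀ * V = 1 := by
    rw [← conjTranspose_eq_transpose_of_trivial]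
    exact hU
  rw [hVt, one_mulVec, ← norm2Sq_eq_dot] at h
  exact h.symm

lemma spec_bound {m n : ℕ} (A : Matrix (Fin m) (Fin n) ℝ) (hH : (Aᵀ * A).IsHermitian)
    (σr : ℝ) (hlb : ∀ i, hH.eigenvalues i ≠ 0 → σr ^ 2 ≤ hH.eigenvalues i)
    (w : Fin n → ℝ) :
    σr ^ 2 * norm2Sq (A.mulVec w) ≤ norm2Sq ((Aᵀ * A).mulVec w) := by
  have hpsd : (Aᵀ * A).PosSemidef := by
    have := posSemidef_conjTranspose_mul_self A
    rwa [conjTranspose_eq_transpose_of_trivial] at this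
  have hnn : ∀ i, 0 ≤ hH.eigenvalues i := fun i => hpsd.eigenvalues_nonneg i
  set U : Matrix (Fin n) (Fin n) ℝ := (hH.eigenvectorUnitary : Matrix (Fin n) (Fin n) ℝ) with hUdef
  set lam : Fin n → ℝ := hH.eigenvalues
  have hspec : Aᵀ * A = U * Matrix.diagonal lam * star U := by
    have := hH.spectral_theorem
    convert this using 3
    rfl
  set x : Fin n → ℝ := (star U).mulVec w with hx
  have hMw : (Aᵀ * A).mulVec w = U.mulVec ((Matrix.diagonal lam).mulVec x) := by
    rw [hspec, ← mulVec_mulVec, ← mulVec_mulVec]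
  have h1 : norm2Sq ((Aᵀ * A).mulVec w) = ∑ i, lam i ^ 2 * x i ^ 2 := by
    rw [hMw, norm2Sq_unitary_mulVec hH.eigenvectorUnitary, norm2Sq]
    exact Finset.sum_congr rfl fun i _ => by rw [mulVec_diagonal]; ring
  have h2 : norm2Sq (A.mulVec w) = ∑ i, lam i * x i ^ 2 := by
    have hd : norm2Sq (A.mulVec w) = w ⬝ᵥ (Aᵀ * A).mulVec w := by
      have := dot_mul_transpose Aᵀ w
      rwa [transpose_transpose, eq_comm] at this
    rw [hd, hMw, dotProduct_mulVec, ← mulVec_transpose, ← conjTranspose_eq_transpose_of_trivial]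
    show x ⬝ᵥ _ = _
    rw [dotProduct]
    exact Finset.sum_congr rfl fun i _ => by rw [mulVec_diagonal]; ring
  rw [h1, h2, Finset.mul_sum]
  apply Finset.sum_le_sum
  intro i _
  rcases eq_or_ne (lam i) 0 with h | h
  · simp [h]
  · have := hlb i h
    have := hnn i
    nlinarith [mul_le_mul_of_nonneg_right (hlb i h)
      (mul_nonneg (hnn i) (sq_nonneg (x i)))]


lemma key_step {m n t : ℕ} (A : Matrix (Fin m) (Fin n) ℝ) (hA : A ≠ 0)
    (hH : (Aᵀ * A).IsHermitian) (σr : ℝ)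
    (hlb : ∀ i, hH.eigenvalues i ≠ 0 → σr ^ 2 ≤ hH.eigenvalues i)
    (B : Fin t → Finset (Fin n))
    (hdisj : ∀ i j, i ≠ j → Disjoint (B i) (B j))
    (hcover : ∀ l : Fin n, ∃ j, l ∈ B j)
    (hne : ∀ j, colSub A (B j) ≠ 0)
    (βJ : ℝ) (hβub : ∀ j, specNorm (colSub A (B j)) ^ 2 / frobSq (colSub A (B j)) ≤ βJ)
    (hβ0 : 0 < βJ)
    (α : ℝ) (hα1 : 0 < α) (hα2 : α < 2 / βJ)
    (u : Fin m → ℝ) (w : Fin n → ℝ) (hu : u = A.mulVec w) :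
    ∑ j, (frobSq (colSub A (B j)) / frobSq A) *
      norm2Sq (u - (α / frobSq (colSub A (B j))) •
        ((colSub A (B j)) * (colSub A (B j))ᵀ).mulVec u)
      ≤ (1 - (2*α - α^2*βJ) * σr^2 / frobSq A) * norm2Sq u := by
  have hF : 0 < frobSq A := frobSq_pos hA
  have hf : ∀ j, 0 < frobSq (colSub A (B j)) := fun j => frobSq_pos (hne j)
  have hαβ : α * βJ < 2 := (lt_div_iff₀ hβ0).mp hα2
  have hcoef : 0 ≤ 2*α - α^2*βJ := by nlinarith
  set f : Fin t → ℝ := fun j => frobSq (colSub A (B j)) with hfdef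
  set s : Fin t → ℝ := fun j => norm2Sq ((colSub A (B j))ᵀ.mulVec u) with hsdef
  have hs : ∀ j, 0 ≤ s j := fun j => norm2Sq_nonneg _
  have termbound : ∀ j, (f j / frobSq A) *
      norm2Sq (u - (α / f j) • ((colSub A (B j)) * (colSub A (B j))ᵀ).mulVec u)
      ≤ (f j / frobSq A) * norm2Sq u - ((2*α - α^2*βJ)/frobSq A) * s j := by
    intro j
    have hexp := norm2Sq_sub_smul u (((colSub A (B j)) * (colSub A (B j))ᵀ).mulVec u) (α / f j)
    rw [dot_mul_transpose] at hexp
    have hq : norm2Sq (((colSub A (B j)) * (colSub A (B j))ᵀ).mulVec u) ≤ βJ * f j * s j := by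
      rw [← mulVec_mulVec]
      calc norm2Sq ((colSub A (B j)).mulVec ((colSub A (B j))ᵀ.mulVec u))
          ≤ specNorm (colSub A (B j))^2 * s j := norm2Sq_mulVec_le _ _
        _ ≤ βJ * f j * s j :=
            mul_le_mul_of_nonneg_right ((div_le_iff₀ (hf j)).mp (hβub j)) (hs j)
    rw [hexp]
    have h1 : (f j / frobSq A) * (norm2Sq u - 2*(α/f j)*(s j) +
        (α/f j)^2 * norm2Sq (((colSub A (B j)) * (colSub A (B j))ᵀ).mulVec u))
        ≤ (f j / frobSq A) * (norm2Sq u - 2*(α/f j)*(s j) + (α/f j)^2 * (βJ * f j * s j)) := by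
      apply mul_le_mul_of_nonneg_left _ (le_of_lt (div_pos (hf j) hF))
      have := mul_le_mul_of_nonneg_left hq (sq_nonneg (α / f j))
      linarith
    have h2 : (f j / frobSq A) * (norm2Sq u - 2*(α/f j)*(s j) + (α/f j)^2 * (βJ * f j * s j))
        = (f j / frobSq A) * norm2Sq u - ((2*α - α^2*βJ)/frobSq A) * s j := by
      have h0 : f j ≠ 0 := (hf j).ne'
      have hF0 : frobSq A ≠ 0 := hF.ne'
      field_simp
      ring
    exact le_of_le_of_eq (le_trans (le_of_eq (by rfl)) (h1.trans (le_of_eq h2))) rfl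
  calc ∑ j, (f j / frobSq A) * norm2Sq (u - (α / f j) •
        ((colSub A (B j)) * (colSub A (B j))ᵀ).mulVec u)
      ≤ ∑ j, ((f j / frobSq A) * norm2Sq u - ((2*α - α^2*βJ)/frobSq A) * s j) :=
        Finset.sum_le_sum fun j _ => termbound j
    _ = (∑ j, f j)/(frobSq A) * norm2Sq u - ((2*α - α^2*βJ)/frobSq A) * ∑ j, s j := by
        rw [Finset.sum_sub_distrib, ← Finset.sum_mul, ← Finset.mul_sum, Finset.sum_div]
    _ = norm2Sq u - ((2*α - α^2*βJ)/frobSq A) * norm2Sq (Aᵀ.mulVec u) := by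
        rw [hfdef, hsdef]
        rw [frobSq_partition A B hdisj hcover, norm2Sq_colSubT_partition A B hdisj hcover,
          div_self hF.ne', one_mul]
    _ ≤ norm2Sq u - ((2*α - α^2*βJ)/frobSq A) * (σr^2 * norm2Sq u) := by
        have hsb := spec_bound A hH σr hlb w
        have : σr^2 * norm2Sq u ≤ norm2Sq (Aᵀ.mulVec u) := by
          rw [hu, mulVec_mulVec]
          exact hsb
        have := mul_le_mul_of_nonneg_left this (div_nonneg hcoef hF.le)
        linarith
    _ = (1 - (2*α - α^2*βJ) * σr^2 / frobSq A) * norm2Sq u := by ring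

theorem stmt12 {m n t : ℕ} (A : Matrix (Fin m) (Fin n) ℝ) (hA : A ≠ 0)
    (hH : (Aᵀ * A).IsHermitian) (σr : ℝ) (hσr : 0 < σr)
    (hleast : IsLeast {x : ℝ | ∃ i, hH.eigenvalues i ≠ 0 ∧ x = hH.eigenvalues i} (σr ^ 2))
    (P : Matrix (Fin n) (Fin m) ℝ) (hP : IsMoorePenrose A P) (b : Fin m → ℝ)
    (B : Fin t → Finset (Fin n))
    (hdisj : ∀ i j, i ≠ j → Disjoint (B i) (B j))
    (hcover : ∀ l : Fin n, ∃ j, l ∈ B j)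
    (hne : ∀ j, colSub A (B j) ≠ 0)
    (βJ : ℝ)
    (hβ : IsGreatest
      {x : ℝ | ∃ j, x = specNorm (colSub A (B j)) ^ 2 / frobSq (colSub A (B j))} βJ)
    (α : ℝ) (hα1 : 0 < α) (hα2 : α < 2 / βJ)
    (z0 : Fin m → ℝ) (hz0 : ∃ v : Fin n → ℝ, z0 = b + A.mulVec v)
    (k : ℕ) (Z : (Fin k → Fin t) → ℕ → (Fin m → ℝ))
    (hZ0 : ∀ ω, Z ω 0 = z0)
    (hZs : ∀ ω (i : Fin k), Z ω ((i : ℕ) + 1) = Z ω (i : ℕ) -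
        (α / frobSq (colSub A (B (ω i)))) •
          ((colSub A (B (ω i))) * (colSub A (B (ω i)))ᵀ).mulVec (Z ω (i : ℕ))) :
    (0 ≤ 1 - (2 * α - α ^ 2 * βJ) * σr ^ 2 / frobSq A ∧
      1 - (2 * α - α ^ 2 * βJ) * σr ^ 2 / frobSq A < 1) ∧
    ∑ ω : Fin k → Fin t, (∏ i, frobSq (colSub A (B (ω i))) / frobSq A) *
        norm2Sq (Z ω k - (1 - A * P).mulVec b)
      ≤ (1 - (2 * α - α ^ 2 * βJ) * σr ^ 2 / frobSq A) ^ k *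
          norm2Sq (z0 - (1 - A * P).mulVec b) := by
  classical
  have hF : 0 < frobSq A := frobSq_pos hA
  have hf : ∀ j, 0 < frobSq (colSub A (B j)) := fun j => frobSq_pos (hne j)
  obtain ⟨j0, hj0⟩ := hβ.1
  have hβ0 : 0 < βJ := by
    rw [hj0]; exact div_pos (pow_pos (specNorm_pos (hne j0)) 2) (hf j0)
  have hαβ : α * βJ < 2 := (lt_div_iff₀ hβ0).mp hα2
  have hcoefpos : 0 < 2*α - α^2*βJ := by nlinarith
  have hlb : ∀ i, hH.eigenvalues i ≠ 0 → σr ^ 2 ≤ hH.eigenvalues i :=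
    fun i hi => hleast.2 ⟨i, hi, rfl⟩
  set ρ : ℝ := 1 - (2 * α - α ^ 2 * βJ) * σr ^ 2 / frobSq A with hρ
  set bp : Fin m → ℝ := (1 - A * P).mulVec b with hbp
  have hkey : ∀ (u : Fin m → ℝ), (∃ w, u = A.mulVec w) →
      ∑ j, (frobSq (colSub A (B j)) / frobSq A) *
        norm2Sq (u - (α / frobSq (colSub A (B j))) •
          ((colSub A (B j)) * (colSub A (B j))ᵀ).mulVec u) ≤ ρ * norm2Sq u := by
    rintro u ⟨w, hw⟩
    exact key_step A hA hH σr hlb B hdisj hcover hne βJ (fun j => hβ.2 ⟨j, rfl⟩) hβ0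
      α hα1 hα2 u w hw
  have hρ1 : ρ < 1 := by
    rw [hρ]
    have : 0 < (2*α - α^2*βJ) * σr^2 / frobSq A :=
      div_pos (mul_pos hcoefpos (pow_pos hσr 2)) hF
    linarith
  have hρ0 : 0 ≤ ρ := by
    obtain ⟨i0, hi0, heq⟩ := hleast.1
    set w : Fin n → ℝ := ⇑(hH.eigenvectorBasis i0) with hw
    have hmv : (Aᵀ * A).mulVec w = σr^2 • w := by
      rw [hH.mulVec_eigenvectorBasis i0, ← heq]
    have hnu : norm2Sq (A.mulVec w) = σr^2 * norm2Sq w := by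
      have hd := dot_mul_transpose Aᵀ w
      rw [transpose_transpose] at hd
      rw [← hd, hmv, dotProduct_smul, smul_eq_mul, norm2Sq_eq_dot]
    have hwpos : 0 < norm2Sq w := by
      rcases (norm2Sq_nonneg w).lt_or_eq with h | h
      · exact h
      · exfalso
        have hz := norm2Sq_eq_zero h.symm
        exact hH.eigenvectorBasis.orthonormal.ne_zero i0 (by ext i; exact congrFun hz i)
    have h0le : (0:ℝ) ≤ ρ * norm2Sq (A.mulVec w) := by
      refine le_trans ?_ (hkey (A.mulVec w) ⟨w, rfl⟩)
      exact Finset.sum_nonneg fun j _ =>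
        mul_nonneg (div_pos (hf j) hF).le (norm2Sq_nonneg _)
    rw [hnu] at h0le
    have hc : 0 < σr^2 * norm2Sq w := mul_pos (pow_pos hσr 2) hwpos
    exact le_of_mul_le_mul_right (by nlinarith) hc
  refine ⟨⟨hρ0, hρ1⟩, ?_⟩
  have hAtbp : Aᵀ.mulVec bp = 0 := by
    have h1 : Aᵀ * (A * P) = Aᵀ := by
      have h2 := congrArg Matrix.transpose hP.1
      rw [transpose_mul, hP.2.2.1] at h2
      exact h2
    have hbp' : bp = b - (A * P).mulVec b := by
      rw [hbp, sub_mulVec, one_mulVec]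
    rw [hbp', mulVec_sub, mulVec_mulVec, h1, sub_self]
  have hNbp : ∀ j, ((colSub A (B j)) * (colSub A (B j))ᵀ).mulVec bp = 0 := by
    intro j
    rw [← mulVec_mulVec]
    have : ((colSub A (B j))ᵀ).mulVec bp = 0 := by
      funext l
      have := colSubT_mulVec A (B j) bp l
      rw [this, hAtbp]
      rfl
    rw [this, mulVec_zero]
  have hres : ∀ ω (i : Fin k),
      Z ω ((i:ℕ)+1) - bp = (Z ω (i:ℕ) - bp) - (α / frobSq (colSub A (B (ω i)))) •
        ((colSub A (B (ω i))) * (colSub A (B (ω i)))ᵀ).mulVec (Z ω (i:ℕ) - bp) := by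
    intro ω i
    rw [hZs ω i, mulVec_sub, hNbp (ω i), sub_zero]
    funext x
    simp only [Pi.sub_apply, Pi.smul_apply, smul_eq_mul]
    ring
  have hrange : ∀ l, l ≤ k → ∀ ω, ∃ w, Z ω l - bp = A.mulVec w := by
    intro l
    induction l with
    | zero =>
      intro _ ω
      obtain ⟨v, hv⟩ := hz0
      refine ⟨v + P.mulVec b, ?_⟩
      rw [hZ0, hv, hbp, sub_mulVec, one_mulVec, mulVec_add, ← mulVec_mulVec]
      funext x
      simp only [Pi.sub_apply, Pi.add_apply]
      ring
    | succ l ih =>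
      intro hlk ω
      have hl : l < k := Nat.lt_of_succ_le hlk
      obtain ⟨w, hw⟩ := ih hl.le ω
      set i : Fin k := ⟨l, hl⟩ with hi
      have hr := hres ω i
      refine ⟨w - (α / frobSq (colSub A (B (ω i)))) •
        (fun l' => if h : l' ∈ B (ω i) then
          ((colSub A (B (ω i)))ᵀ.mulVec (Z ω l - bp)) ⟨l', h⟩ else 0), ?_⟩
      have hil : ((i:ℕ)) = l := rfl
      rw [hil] at hr
      rw [hr, hw, mulVec_sub, mulVec_smul]
      congr 2
      rw [← mulVec_mulVec, colSub_mulVec]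
  have hdep : ∀ l, l ≤ k → ∀ ω ω', (∀ i : Fin k, (i:ℕ) < l → ω i = ω' i) → Z ω l = Z ω' l := by
    intro l
    induction l with
    | zero => intro _ ω ω' _; rw [hZ0, hZ0]
    | succ l ih =>
      intro hlk ω ω' hag
      have hl : l < k := Nat.lt_of_succ_le hlk
      set i : Fin k := ⟨l, hl⟩ with hi
      have h1 : Z ω l = Z ω' l := ih hl.le ω ω' (fun i' hi' => hag i' (Nat.lt_succ_of_lt hi'))
      have h2 : ω i = ω' i := hag i (Nat.lt_succ_self l)
      have e1 := hZs ω i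
      have e2 := hZs ω' i
      have hil : ((i:ℕ)) = l := rfl
      rw [hil] at e1 e2
      rw [e1, e2, h1, h2]
  set p : Fin t → ℝ := fun j => frobSq (colSub A (B j)) / frobSq A with hp
  have hp0 : ∀ j, 0 ≤ p j := fun j => (div_pos (hf j) hF).le
  have hpsum : ∑ j, p j = 1 := by
    rw [hp, ← Finset.sum_div, frobSq_partition A B hdisj hcover, div_self hF.ne']
  have hW0 : ∀ ω : Fin k → Fin t, 0 ≤ ∏ i, p (ω i) :=
    fun ω => Finset.prod_nonneg fun i _ => hp0 _
  have hWsum : ∑ ω : Fin k → Fin t, ∏ i, p (ω i) = 1 := by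
    rw [← Fintype.prod_sum (fun (_ : Fin k) (j : Fin t) => p j)]
    simp [hpsum]
  have hstep : ∀ l, l < k →
      ∑ ω : Fin k → Fin t, (∏ i, p (ω i)) * norm2Sq (Z ω (l+1) - bp) ≤
        ρ * ∑ ω : Fin k → Fin t, (∏ i, p (ω i)) * norm2Sq (Z ω l - bp) := by
    intro l hl
    set L : Fin k := ⟨l, hl⟩ with hLdef
    set e := Equiv.funSplitAt L (Fin t) with he
    set q : ({j : Fin k // j ≠ L} → Fin t) → ℝ := fun σ => ∏ i', p (σ i') with hq
    set u : ({j : Fin k // j ≠ L} → Fin t) → (Fin m → ℝ) :=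
      fun σ => Z (e.symm (j0, σ)) l - bp with hu
    have hq0 : ∀ σ, 0 ≤ q σ := fun σ => Finset.prod_nonneg fun _ _ => hp0 _
    have hsymm_at : ∀ (j : Fin t) σ, (e.symm (j, σ)) L = j := by
      intro j σ
      rw [he, Equiv.funSplitAt_symm_apply, dif_pos rfl]
    have hsymm_ne : ∀ (j : Fin t) σ (i : Fin k) (h : i ≠ L), (e.symm (j, σ)) i = σ ⟨i, h⟩ := by
      intro j σ i h
      rw [he, Equiv.funSplitAt_symm_apply, dif_neg h]
    have hWsplit : ∀ (j : Fin t) σ, (∏ i, p ((e.symm (j, σ)) i)) = p j * q σ := by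
      intro j σ
      rw [← Finset.mul_prod_erase Finset.univ _ (Finset.mem_univ L), hsymm_at]
      congr 1
      rw [Finset.prod_subtype (Finset.univ.erase L) (p := fun i => i ≠ L)
        (by intro x; simp [Finset.mem_erase])]
      exact Finset.prod_congr rfl fun i _ => by rw [hsymm_ne j σ i.1 i.2]
    have hZind : ∀ (j : Fin t) σ, Z (e.symm (j, σ)) l = Z (e.symm (j0, σ)) l := by
      intro j σ
      apply hdep l hl.le
      intro i hi
      have hiL : i ≠ L := by
        intro hcon
        rw [hcon] at hi
        exact lt_irrefl l hi
      rw [hsymm_ne j σ i hiL, hsymm_ne j0 σ i hiL]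
    have hLHS : ∑ ω : Fin k → Fin t, (∏ i, p (ω i)) * norm2Sq (Z ω (l+1) - bp)
        = ∑ σ, ∑ j, (p j * q σ) * norm2Sq (u σ - (α / frobSq (colSub A (B j))) •
            ((colSub A (B j)) * (colSub A (B j))ᵀ).mulVec (u σ)) := by
      rw [← Equiv.sum_comp e.symm
        (fun ω => (∏ i, p (ω i)) * norm2Sq (Z ω (l+1) - bp)), Fintype.sum_prod_type,
        Finset.sum_comm]
      refine Finset.sum_congr rfl fun σ _ => Finset.sum_congr rfl fun j _ => ?_
      rw [hWsplit]
      congr 1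
      have hr := hres (e.symm (j, σ)) L
      have hLl : ((L:ℕ)) = l := rfl
      rw [hLl, hsymm_at j σ, hZind j σ] at hr
      rw [hr]
    have hRHS : ∑ ω : Fin k → Fin t, (∏ i, p (ω i)) * norm2Sq (Z ω l - bp)
        = ∑ σ, q σ * norm2Sq (u σ) := by
      rw [← Equiv.sum_comp e.symm
        (fun ω => (∏ i, p (ω i)) * norm2Sq (Z ω l - bp)), Fintype.sum_prod_type,
        Finset.sum_comm]
      refine Finset.sum_congr rfl fun σ _ => ?_
      have hterm : ∀ j, (∏ i, p ((e.symm (j, σ)) i)) * norm2Sq (Z (e.symm (j, σ)) l - bp)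
          = p j * (q σ * norm2Sq (u σ)) := by
        intro j
        rw [hWsplit, hZind]
        ring
      rw [Finset.sum_congr rfl (fun j _ => hterm j), ← Finset.sum_mul, hpsum, one_mul]
    rw [hLHS, hRHS, Finset.mul_sum]
    apply Finset.sum_le_sum
    intro σ _
    have hukey := hkey (u σ) (hrange l hl.le (e.symm (j0, σ)))
    calc ∑ j, (p j * q σ) * norm2Sq (u σ - (α / frobSq (colSub A (B j))) •
            ((colSub A (B j)) * (colSub A (B j))ᵀ).mulVec (u σ))
        = q σ * ∑ j, p j * norm2Sq (u σ - (α / frobSq (colSub A (B j))) •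
            ((colSub A (B j)) * (colSub A (B j))ᵀ).mulVec (u σ)) := by
          rw [Finset.mul_sum]
          exact Finset.sum_congr rfl fun j _ => by ring
      _ ≤ q σ * (ρ * norm2Sq (u σ)) := mul_le_mul_of_nonneg_left hukey (hq0 σ)
      _ = ρ * (q σ * norm2Sq (u σ)) := by ring
  have hiter : ∀ l, l ≤ k →
      ∑ ω : Fin k → Fin t, (∏ i, p (ω i)) * norm2Sq (Z ω l - bp) ≤
        ρ^l * norm2Sq (z0 - bp) := by
    intro l
    induction l with
    | zero =>
      intro _
      simp only [hZ0, pow_zero, one_mul]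
      rw [← Finset.sum_mul, hWsum, one_mul]
    | succ l ih =>
      intro hlk
      have hl : l < k := Nat.lt_of_succ_le hlk
      calc ∑ ω : Fin k → Fin t, (∏ i, p (ω i)) * norm2Sq (Z ω (l+1) - bp)
          ≤ ρ * ∑ ω : Fin k → Fin t, (∏ i, p (ω i)) * norm2Sq (Z ω l - bp) := hstep l hl
        _ ≤ ρ * (ρ^l * norm2Sq (z0 - bp)) := mul_le_mul_of_nonneg_left (ih hl.le) hρ0
        _ = ρ^(l+1) * norm2Sq (z0 - bp) := by ring
  exact hiter k le_rfl
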